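/- In a finite-dimensional real vector space V with a symmetric bilinear form ḡ of signature making W ⊂ V a degenerate hyperplane with one-dimensional radical Rad = W ∩ W^⊥, given a complement S of Rad in W (a screen subspace) on which ḡ is nondegenerate, and a nonzero ξ ∈ Rad, there exists a unique vector N ∈ V with ḡ(N,ξ) = 1, ḡ(N,N) = 0, and ḡ(N,w) = 0 for all w ∈ S. -/

import Mathlib

open Module

/-- Existence and uniqueness of the null transversal vector `N` (Prop. 2, pointwise):
given a degenerate hyperplane `W` with one-dimensional radical `Rad = W ⊓ W^⊥`,
a screen complement `S` of `Rad` in `W` on which `ḡ` is nondegenerate, and a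
nonzero `ξ ∈ Rad`, there is a unique `N` with `ḡ(N,ξ) = 1`, `ḡ(N,N) = 0` and
`ḡ(N,w) = 0` for all `w ∈ S`. -/
theorem stmt_1 (n : ℕ) {V : Type*} [AddCommGroup V] [Module ℝ V]
    [FiniteDimensional ℝ V]
    (hV : finrank ℝ V = n + 2)
    (gbar : LinearMap.BilinForm ℝ V) (hsym : gbar.IsSymm)
    (hnd : gbar.Nondegenerate)
    (W : Submodule ℝ V) (hW : finrank ℝ W = n + 1)
    (hRad : finrank ℝ ((W ⊓ gbar.orthogonal W : Submodule ℝ V)) = 1)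
    (S : Submodule ℝ V) (hSW : S ≤ W)
    (hdisj : Disjoint S (W ⊓ gbar.orthogonal W))
    (hsup : S ⊔ (W ⊓ gbar.orthogonal W) = W)
    (hSnd : (gbar.restrict S).Nondegenerate)
    (ξ : V) (hξ : ξ ∈ W ⊓ gbar.orthogonal W) (hξ0 : ξ ≠ 0) :
    ∃! N : V, gbar N ξ = 1 ∧ gbar N N = 0 ∧ ∀ w ∈ S, gbar N w = 0 := by
  have hrefl : gbar.IsRefl := hsym.isRefl
  obtain ⟨hξW, hξperp⟩ := hξ
  -- basic orthogonality facts about ξ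
  have hξw : ∀ w ∈ W, gbar w ξ = 0 := fun w hw => hξperp w hw
  have hwξ : ∀ w ∈ W, gbar ξ w = 0 := fun w hw => hrefl w ξ (hξw w hw)
  have hξξ : gbar ξ ξ = 0 := hξw ξ hξW
  -- W^⊥ has dimension 1, hence equals the radical, which is span ξ
  have hperp1 : finrank ℝ (gbar.orthogonal W) = 1 := by
    rw [LinearMap.BilinForm.finrank_orthogonal hnd W, hV, hW]
    omega
  have hRadperp : (W ⊓ gbar.orthogonal W : Submodule ℝ V) = gbar.orthogonal W := by
    apply Submodule.eq_of_le_of_finrank_eq inf_le_right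
    rw [hRad, hperp1]
  have hspan : (Submodule.span ℝ {ξ} : Submodule ℝ V) = W ⊓ gbar.orthogonal W := by
    apply Submodule.eq_of_le_of_finrank_eq
    · rw [Submodule.span_le, Set.singleton_subset_iff]; exact ⟨hξW, hξperp⟩
    · rw [hRad, finrank_span_singleton hξ0]
  -- existence of F with gbar F ξ = 1
  obtain ⟨v, hv⟩ : ∃ v, gbar ξ v ≠ 0 := by
    by_contra h
    push_neg at h
    exact hξ0 (hnd.1 ξ h)
  set F : V := (gbar ξ v)⁻¹ • v with hF
  have hFξ : gbar F ξ = 1 := by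
    rw [hF, map_smul, LinearMap.smul_apply, smul_eq_mul, ← hsym.eq ξ v]
    field_simp
  -- correct F by an element of S to make it orthogonal to S
  set φ : S →ₗ[ℝ] ℝ := (gbar F).comp S.subtype with hφ
  set s : S := ((gbar.restrict S).toDual hSnd).symm φ with hs
  have hsS : ∀ w : S, gbar (s : V) (w : V) = gbar F (w : V) := by
    intro w
    have := LinearMap.BilinForm.apply_toDual_symm_apply (B := gbar.restrict S)
      (hB := hSnd) (f := φ) (v := w)
    simp only [LinearMap.BilinForm.restrict_apply, hφ, LinearMap.coe_comp,
      Function.comp_apply, Submodule.coe_subtype] at this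
    exact this
  set F' : V := F - (s : V) with hF'
  have hsξ : gbar (s : V) ξ = 0 := hξw _ (hSW s.2)
  have hF'ξ : gbar F' ξ = 1 := by
    simp [hF', map_sub, hFξ, hsξ]
  have hξF' : gbar ξ F' = 1 := by rw [← hsym.eq F' ξ]; simpa using hF'ξ
  have hF'S : ∀ w ∈ S, gbar F' w = 0 := by
    intro w hw
    have := hsS ⟨w, hw⟩
    simp only [hF', map_sub, LinearMap.sub_apply]
    simp only [Submodule.coe_mk] at this
    rw [this]; ring
  set c : ℝ := gbar F' F' / 2 with hc
  refine ⟨F' - c • ξ, ⟨?_, ?_, ?_⟩, ?_⟩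
  · simp [map_sub, map_smul, hF'ξ, hξξ]
  · have : gbar (F' - c • ξ) (F' - c • ξ)
        = gbar F' F' - c * gbar F' ξ - c * gbar ξ F' + c * c * gbar ξ ξ := by
      simp only [map_sub, map_smul, LinearMap.sub_apply, LinearMap.smul_apply,
        smul_eq_mul]
      ring
    rw [this, hF'ξ, hξF', hξξ, hc]; ring
  · intro w hw
    have h1 := hF'S w hw
    have h2 : gbar ξ w = 0 := hwξ w (hSW hw)
    simp [map_sub, map_smul, h1, h2]
  · -- uniqueness
    rintro N ⟨hN1, hN2, hN3⟩
    set M : V := F' - c • ξ with hM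
    have hM1 : gbar M ξ = 1 := by simp [hM, map_sub, map_smul, hF'ξ, hξξ]
    have hM2 : gbar M M = 0 := by
      have : gbar (F' - c • ξ) (F' - c • ξ)
          = gbar F' F' - c * gbar F' ξ - c * gbar ξ F' + c * c * gbar ξ ξ := by
        simp only [map_sub, map_smul, LinearMap.sub_apply, LinearMap.smul_apply,
          smul_eq_mul]
        ring
      rw [hM, this, hF'ξ, hξF', hξξ, hc]; ring
    have hM3 : ∀ w ∈ S, gbar M w = 0 := by
      intro w hw
      have h1 := hF'S w hw
      have h2 : gbar ξ w = 0 := hwξ w (hSW hw)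
      simp [hM, map_sub, map_smul, h1, h2]
    -- the difference D = N - M is orthogonal to all of W
    set D : V := N - M with hD
    have hDW : ∀ w ∈ W, gbar D w = 0 := by
      intro w hw
      rw [← hsup] at hw
      obtain ⟨a, ha, b, hb, rfl⟩ := Submodule.mem_sup.mp hw
      have hb' : b ∈ (Submodule.span ℝ {ξ} : Submodule ℝ V) := hspan ▸ hb
      obtain ⟨t, rfl⟩ := Submodule.mem_span_singleton.mp hb'
      have hDa : gbar D a = 0 := by
        simp [hD, map_sub, hN3 a ha, hM3 a ha]
      have hDξ : gbar D ξ = 0 := by simp [hD, map_sub, hN1, hM1]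
      simp [map_add, map_smul, hDa, hDξ]
    have hDperp : D ∈ gbar.orthogonal W := by
      rw [LinearMap.BilinForm.mem_orthogonal_iff]
      intro w hw
      exact hrefl D w (hDW w hw)
    -- hence D ∈ span ξ
    have hDspan : D ∈ (Submodule.span ℝ {ξ} : Submodule ℝ V) := by
      rw [hspan, hRadperp]; exact hDperp
    obtain ⟨t, ht⟩ := Submodule.mem_span_singleton.mp hDspan
    have hNM : N = M + t • ξ := by
      have : N - M = t • ξ := ht.symm
      linear_combination (norm := abel) this
    have hMξ' : gbar ξ M = 1 := by rw [← hsym.eq M ξ]; simpa using hM1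
    have ht0 : t = 0 := by
      have expand : gbar N N
          = gbar M M + t * gbar M ξ + t * gbar ξ M + t * t * gbar ξ ξ := by
        rw [hNM]
        simp only [map_add, map_smul, LinearMap.add_apply, LinearMap.smul_apply,
          smul_eq_mul]
        ring
      rw [hN2, hM2, hM1, hMξ', hξξ] at expand
      linarith
    rw [hNM, ht0, zero_smul, add_zero]
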